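/- Let μ be the measure on ℝ² with density μ(dx,dy) = (e^{-x}/(2λ)) φ(λ + (y-x)/(2λ)) dx dy, where λ > 0. Then for A₂ = {(x,y) : x > 0 or y > 0}, μ(A₂) = 2Φ(λ). -/

import Mathlib

open Real MeasureTheory
open Set Filter Topology

noncomputable def stdPhi (t : ℝ) : ℝ := (Real.sqrt (2 * Real.pi))⁻¹ * Real.exp (-t ^ 2 / 2)

noncomputable def stdPhiCDF (x : ℝ) : ℝ := ∫ t in Set.Iic x, stdPhi t

/-- Exponent measure of the bivariate Hüsler-Reiss distribution, with density
`e^{-x}/(2λ) φ(λ + (y-x)/(2λ))` with respect to Lebesgue measure on ℝ². -/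
noncomputable def HRexpMeasure (l : ℝ) : Measure (ℝ × ℝ) :=
  (volume : Measure (ℝ × ℝ)).withDensity
    (fun p => ENNReal.ofReal (Real.exp (-p.1) / (2 * l) * stdPhi (l + (p.2 - p.1) / (2 * l))))

lemma stdPhi_nonneg (t : ℝ) : 0 ≤ stdPhi t := by
  unfold stdPhi; positivity

lemma continuous_stdPhi : Continuous stdPhi := by
  unfold stdPhi
  exact continuous_const.mul ((continuous_pow 2).neg.div_const 2).rexp

lemma stdPhi_neg (t : ℝ) : stdPhi (-t) = stdPhi t := by simp [stdPhi]

lemma stdPhi_eq (t : ℝ) : stdPhi t = (Real.sqrt (2 * Real.pi))⁻¹ * Real.exp (-(2⁻¹ : ℝ) * t ^ 2) := by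
  rw [stdPhi]; ring_nf

lemma integrable_stdPhi : Integrable stdPhi := by
  have : stdPhi = fun t => (Real.sqrt (2 * Real.pi))⁻¹ * Real.exp (-(2⁻¹ : ℝ) * t ^ 2) :=
    funext stdPhi_eq
  rw [this]
  exact (integrable_exp_neg_mul_sq (by norm_num)).const_mul _

lemma integral_stdPhi : ∫ t, stdPhi t = 1 := by
  simp_rw [stdPhi_eq]
  rw [integral_const_mul, integral_gaussian]
  rw [show (π / (2⁻¹:ℝ)) = 2 * π by ring]
  rw [inv_mul_cancel₀]
  positivity

lemma integrable_stdPhi_affine {b : ℝ} (hb : b ≠ 0) (e : ℝ) :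
    Integrable (fun y => stdPhi (y * b + e)) :=
  (integrable_stdPhi.comp_add_right e).comp_mul_right' hb

lemma stdPhi_mul (c t : ℝ) :
    Real.exp (-(c * t)) * stdPhi t = Real.exp (c ^ 2 / 2) * stdPhi (t + c) := by
  simp only [stdPhi]
  rw [mul_left_comm, ← Real.exp_add, mul_left_comm, ← Real.exp_add]
  congr 1
  ring

lemma integral_exp_mul_stdPhi (c : ℝ) :
    ∫ t, Real.exp (-(c * t)) * stdPhi t = Real.exp (c ^ 2 / 2) := by
  simp_rw [stdPhi_mul]
  rw [integral_const_mul, integral_add_right_eq_self stdPhi c, integral_stdPhi, mul_one]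
lemma stdPhiCDF_nonneg (x : ℝ) : 0 ≤ stdPhiCDF x :=
  setIntegral_nonneg measurableSet_Iic fun t _ => stdPhi_nonneg t

lemma stdPhiCDF_mono : Monotone stdPhiCDF := fun a b hab =>
  setIntegral_mono_set integrable_stdPhi.integrableOn
    (Eventually.of_forall fun t => stdPhi_nonneg t)
    (HasSubset.Subset.eventuallyLE (Iic_subset_Iic.2 hab))

lemma stdPhiCDF_le_one (x : ℝ) : stdPhiCDF x ≤ 1 := by
  rw [← integral_stdPhi]
  exact setIntegral_le_integral integrable_stdPhi (Eventually.of_forall fun t => stdPhi_nonneg t)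

lemma hasDerivAt_stdPhiCDF (x : ℝ) : HasDerivAt stdPhiCDF (stdPhi x) x := by
  have key : stdPhiCDF = fun y => stdPhiCDF 0 + ∫ t in (0:ℝ)..y, stdPhi t := by
    funext y
    have := intervalIntegral.integral_Iic_sub_Iic (f := stdPhi) (μ := volume)
      integrable_stdPhi.integrableOn integrable_stdPhi.integrableOn (a := 0) (b := y)
    simp only [stdPhiCDF]
    linarith
  rw [key]
  exact (intervalIntegral.integral_hasDerivAt_right
    integrable_stdPhi.intervalIntegrable
    continuous_stdPhi.stronglyMeasurable.stronglyMeasurableAtFilter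
    continuous_stdPhi.continuousAt).const_add _

lemma continuous_stdPhiCDF : Continuous stdPhiCDF :=
  continuous_iff_continuousAt.2 fun x => (hasDerivAt_stdPhiCDF x).continuousAt

lemma tendsto_stdPhiCDF_atTop : Tendsto stdPhiCDF atTop (𝓝 1) := by
  have h := tendsto_setIntegral_of_monotone (μ := volume) (f := stdPhi)
    (s := fun x : ℝ => Iic x) (fun i => measurableSet_Iic)
    (fun a b hab => Iic_subset_Iic.2 hab)
    (by rw [iUnion_Iic]; exact integrable_stdPhi.integrableOn)
  rwa [iUnion_Iic, Measure.restrict_univ, integral_stdPhi] at h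

lemma tendsto_stdPhiCDF_atBot : Tendsto stdPhiCDF atBot (𝓝 0) := by
  have h := tendsto_setIntegral_of_antitone (μ := volume) (f := stdPhi)
    (s := fun x : ℝ => Iic (-x)) (fun i => measurableSet_Iic)
    (fun a b hab => Iic_subset_Iic.2 (neg_le_neg hab))
    ⟨0, integrable_stdPhi.integrableOn⟩
  have h2 : ⋂ x : ℝ, Iic (-x) = (∅ : Set ℝ) := by
    ext y
    simp only [mem_iInter, mem_Iic, mem_empty_iff_false, iff_false, not_forall, not_le]
    exact ⟨-(y - 1), by linarith⟩
  rw [h2] at h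
  simp only [Measure.restrict_empty, integral_zero_measure] at h
  have := h.comp tendsto_neg_atBot_atTop
  simp only [Function.comp_def, neg_neg] at this
  exact this

lemma stdPhiCDF_neg (x : ℝ) : stdPhiCDF (-x) = 1 - stdPhiCDF x := by
  have h1 : stdPhiCDF (-x) = ∫ t in Ioi x, stdPhi t := by
    rw [stdPhiCDF]
    calc ∫ t in Iic (-x), stdPhi t = ∫ t in Iic (-x), stdPhi (-t) := by simp_rw [stdPhi_neg]
    _ = ∫ t in Ioi x, stdPhi t := by rw [integral_comp_neg_Iic, neg_neg]
  have h2 := intervalIntegral.integral_Iic_add_Ioi (μ := volume) (f := stdPhi) (b := x)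
    integrable_stdPhi.integrableOn integrable_stdPhi.integrableOn
  rw [integral_stdPhi] at h2
  rw [h1]
  have : stdPhiCDF x = ∫ t in Iic x, stdPhi t := rfl
  linarith

lemma stdPhiCDF_chernoff {c : ℝ} (hc : 0 ≤ c) (u : ℝ) :
    stdPhiCDF u ≤ Real.exp (c * u + c ^ 2 / 2) := by
  have hint0 : Integrable (fun t => Real.exp (-(c * t)) * stdPhi t) := by
    simp_rw [stdPhi_mul]
    exact (integrable_stdPhi.comp_add_right c).const_mul _
  have hint : Integrable (fun t => Real.exp (c * u) * (Real.exp (-(c * t)) * stdPhi t)) :=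
    hint0.const_mul _
  have step1 : stdPhiCDF u ≤
      ∫ t in Iic u, Real.exp (c * u) * (Real.exp (-(c * t)) * stdPhi t) := by
    refine setIntegral_mono_on integrable_stdPhi.integrableOn hint.integrableOn
      measurableSet_Iic fun t ht => ?_
    have h1 : (1:ℝ) ≤ Real.exp (c * u) * Real.exp (-(c * t)) := by
      rw [← Real.exp_add]
      exact Real.one_le_exp (by nlinarith [mem_Iic.1 ht])
    nlinarith [stdPhi_nonneg t]
  have step2 : (∫ t in Iic u, Real.exp (c * u) * (Real.exp (-(c * t)) * stdPhi t)) ≤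
      ∫ t, Real.exp (c * u) * (Real.exp (-(c * t)) * stdPhi t) :=
    setIntegral_le_integral hint (Eventually.of_forall fun t => by
      have := stdPhi_nonneg t; positivity)
  calc stdPhiCDF u ≤ _ := step1
  _ ≤ _ := step2
  _ = Real.exp (c * u) * Real.exp (c ^ 2 / 2) := by
    rw [integral_const_mul, integral_exp_mul_stdPhi]
  _ = Real.exp (c * u + c ^ 2 / 2) := (Real.exp_add _ _).symm
lemma setIntegral_Iic_comp_add_right (f : ℝ → ℝ) (a b : ℝ) :
    ∫ x in Iic b, f (x + a) = ∫ x in Iic (b + a), f x := by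
  have hemb : MeasurableEmbedding (fun x : ℝ => x + a) :=
    (Homeomorph.addRight a).isClosedEmbedding.measurableEmbedding
  have h := (measurePreserving_add_right (volume : Measure ℝ) a).setIntegral_preimage_emb
    hemb f (Iic (b + a))
  have hpre : (fun x : ℝ => x + a) ⁻¹' Iic (b + a) = Iic b := by
    ext y; simp only [mem_preimage, mem_Iic]; constructor <;> intro <;> linarith
  rwa [hpre] at h

lemma inner_univ {l : ℝ} (hl : 0 < l) (x : ℝ) :
    ∫ y : ℝ, stdPhi (l + (y - x) / (2 * l)) = 2 * l := by
  have h2l : (0:ℝ) < 2 * l := by linarith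
  have heq : (fun y : ℝ => stdPhi (l + (y - x) / (2 * l)))
      = fun y : ℝ => (fun z => stdPhi (z + (l - x / (2 * l)))) (y * (2 * l)⁻¹) := by
    funext y
    congr 1
    field_simp
    ring
  rw [heq, Measure.integral_comp_mul_right (fun z => stdPhi (z + (l - x / (2 * l)))) (2 * l)⁻¹,
    integral_add_right_eq_self stdPhi, integral_stdPhi, inv_inv, smul_eq_mul, mul_one,
    abs_of_pos h2l]

lemma inner_Ioi {l : ℝ} (hl : 0 < l) (x : ℝ) :
    ∫ y in Ioi (0:ℝ), stdPhi (l + (y - x) / (2 * l))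
      = (2 * l) * stdPhiCDF (x / (2 * l) - l) := by
  have h2l : (0:ℝ) < 2 * l := by linarith
  set a : ℝ := x / (2 * l) - l with ha
  have heq : ∀ y : ℝ, stdPhi (l + (y - x) / (2 * l)) = stdPhi (a - y * (2 * l)⁻¹) := by
    intro y
    rw [← stdPhi_neg (a - y * (2 * l)⁻¹)]
    congr 1
    rw [ha]
    field_simp
    ring
  calc ∫ y in Ioi (0:ℝ), stdPhi (l + (y - x) / (2 * l))
      = ∫ y in Ioi (0:ℝ), (fun z => stdPhi (a - z)) (y * (2 * l)⁻¹) :=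
        setIntegral_congr_fun measurableSet_Ioi fun y _ => heq y
  _ = (2 * l) * ∫ z in Ioi (0:ℝ), stdPhi (a - z) := by
        have h := integral_comp_mul_right_Ioi (fun z => stdPhi (a - z)) 0 (inv_pos.2 h2l)
        simp only [zero_mul, inv_inv, smul_eq_mul] at h
        exact h
  _ = (2 * l) * stdPhiCDF a := by
        congr 1
        have h1 := integral_comp_neg_Ioi (0:ℝ) (fun u => stdPhi (a + u))
        simp only [neg_zero] at h1
        have h2 := setIntegral_Iic_comp_add_right stdPhi a 0
        simp only [zero_add] at h2
        calc ∫ z in Ioi (0:ℝ), stdPhi (a - z)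
            = ∫ u in Iic (0:ℝ), stdPhi (a + u) := by
              rw [← h1]
              exact setIntegral_congr_fun measurableSet_Ioi fun z _ => by
                simp [sub_eq_add_neg]
        _ = ∫ u in Iic (0:ℝ), stdPhi (u + a) := by
              refine setIntegral_congr_fun measurableSet_Iic fun u _ => by rw [add_comm]
        _ = stdPhiCDF a := h2

lemma g_le {l : ℝ} (hl : 0 < l) (x : ℝ) :
    Real.exp (-x) * stdPhiCDF (x / (2 * l) - l) ≤ Real.exp (x + 4 * l ^ 2) := by
  have h := stdPhiCDF_chernoff (c := 4 * l) (by linarith) (x / (2 * l) - l)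
  calc Real.exp (-x) * stdPhiCDF (x / (2 * l) - l)
      ≤ Real.exp (-x) * Real.exp (4 * l * (x / (2 * l) - l) + (4 * l) ^ 2 / 2) :=
        mul_le_mul_of_nonneg_left h (Real.exp_nonneg _)
  _ = Real.exp (x + 4 * l ^ 2) := by
        rw [← Real.exp_add]
        congr 1
        field_simp
        ring

set_option maxHeartbeats 1000000 in
lemma integrableOn_g {l : ℝ} (hl : 0 < l) :
    IntegrableOn (fun x => Real.exp (-x) * stdPhiCDF (x / (2 * l) - l)) (Iic 0) := by
  have hmaj : IntegrableOn (fun x => Real.exp (4 * l ^ 2) * Real.exp x) (Iic 0) :=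
    (integrableOn_exp_Iic 0).const_mul _
  refine Integrable.mono hmaj ?_ ?_
  · exact ((continuous_exp.comp continuous_neg).mul
      (continuous_stdPhiCDF.comp ((continuous_id.div_const (2 * l)).sub continuous_const))).aestronglyMeasurable
  · refine Eventually.of_forall fun x => ?_
    have h1 : 0 ≤ Real.exp (-x) * stdPhiCDF (x / (2 * l) - l) :=
      mul_nonneg (Real.exp_nonneg _) (stdPhiCDF_nonneg _)
    rw [Real.norm_of_nonneg h1, Real.norm_of_nonneg (by positivity)]
    calc Real.exp (-x) * stdPhiCDF (x / (2 * l) - l) ≤ Real.exp (x + 4 * l ^ 2) := g_le hl x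
    _ = Real.exp (4 * l ^ 2) * Real.exp x := by rw [← Real.exp_add]; ring_nf
lemma exp_mul_stdPhi_affine {l : ℝ} (hl : 0 < l) (x : ℝ) :
    Real.exp (-x) * stdPhi (x / (2 * l) - l) = stdPhi (x / (2 * l) + l) := by
  simp only [stdPhi]
  rw [mul_left_comm, ← Real.exp_add]
  congr 1
  field_simp
  ring

lemma key_integral {l : ℝ} (hl : 0 < l) :
    ∫ x in Iic (0:ℝ), Real.exp (-x) * stdPhiCDF (x / (2 * l) - l)
      = stdPhiCDF l - stdPhiCDF (-l) := by
  have h2l : (0:ℝ) < 2 * l := by linarith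
  set G : ℝ → ℝ := fun x => stdPhiCDF (x / (2 * l) + l) - Real.exp (-x) * stdPhiCDF (x / (2 * l) - l)
    with hG
  have hderiv : ∀ x : ℝ, HasDerivAt G (Real.exp (-x) * stdPhiCDF (x / (2 * l) - l)) x := by
    intro x
    have d1 : HasDerivAt (fun x : ℝ => x / (2 * l) + l) ((2 * l)⁻¹) x := by
      simpa [one_div] using ((hasDerivAt_id x).div_const (2 * l)).add_const l
    have d2 : HasDerivAt (fun x : ℝ => x / (2 * l) - l) ((2 * l)⁻¹) x := by
      simpa [one_div] using ((hasDerivAt_id x).div_const (2 * l)).sub_const l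
    have h1 : HasDerivAt (fun x : ℝ => stdPhiCDF (x / (2 * l) + l))
        (stdPhi (x / (2 * l) + l) * (2 * l)⁻¹) x :=
      (hasDerivAt_stdPhiCDF _).comp x d1
    have h2 : HasDerivAt (fun x : ℝ => stdPhiCDF (x / (2 * l) - l))
        (stdPhi (x / (2 * l) - l) * (2 * l)⁻¹) x :=
      (hasDerivAt_stdPhiCDF _).comp x d2
    have h3 : HasDerivAt (fun x : ℝ => Real.exp (-x)) (-Real.exp (-x)) x := by
      simpa using ((hasDerivAt_id x).neg).exp
    have h4 := (h3.mul h2).neg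
    have h5 := h1.add h4
    have hkey := exp_mul_stdPhi_affine hl x
    have h6 := h1.sub (h3.mul h2)
    refine h6.congr_deriv ?_
    rw [← hkey]
    ring
  have hcont : ContinuousWithinAt G (Iic 0) 0 :=
    (hderiv 0).continuousAt.continuousWithinAt
  have ht1 : Tendsto (fun x : ℝ => x / (2 * l) + l) atBot atBot := by
    apply tendsto_atBot_add_const_right
    exact tendsto_id.atBot_div_const h2l
  have ht2 : Tendsto (fun x : ℝ => stdPhiCDF (x / (2 * l) + l)) atBot (𝓝 0) :=
    tendsto_stdPhiCDF_atBot.comp ht1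
  have ht3 : Tendsto (fun x : ℝ => Real.exp (-x) * stdPhiCDF (x / (2 * l) - l)) atBot (𝓝 0) := by
    have hup : Tendsto (fun x : ℝ => Real.exp (x + 4 * l ^ 2)) atBot (𝓝 0) :=
      Real.tendsto_exp_atBot.comp (tendsto_atBot_add_const_right _ _ tendsto_id)
    refine tendsto_of_tendsto_of_tendsto_of_le_of_le tendsto_const_nhds hup ?_ ?_
    · exact fun x => mul_nonneg (Real.exp_nonneg _) (stdPhiCDF_nonneg _)
    · exact fun x => g_le hl x
  have htend : Tendsto G atBot (𝓝 0) := by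
    have := ht2.sub ht3
    simpa using this
  have hres := integral_Iic_of_hasDerivAt_of_tendsto hcont
    (fun x _ => hderiv x) (integrableOn_g hl) htend
  rw [hres, hG]
  simp only [zero_div, zero_add, neg_zero, Real.exp_zero, one_mul, zero_sub, sub_zero]
lemma integrable_inner {l : ℝ} (hl : 0 < l) (x : ℝ) :
    Integrable (fun y : ℝ => stdPhi (l + (y - x) / (2 * l))) := by
  have h2l : (0:ℝ) < 2 * l := by linarith
  have heq : (fun y : ℝ => stdPhi (l + (y - x) / (2 * l)))
      = fun y : ℝ => stdPhi (y * (2 * l)⁻¹ + (l - x / (2 * l))) := by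
    funext y; congr 1; field_simp; ring
  rw [heq]
  exact integrable_stdPhi_affine (inv_ne_zero h2l.ne') _

lemma inner_lintegral_univ {l : ℝ} (hl : 0 < l) (x : ℝ) :
    ∫⁻ y : ℝ, ENNReal.ofReal (Real.exp (-x) / (2 * l) * stdPhi (l + (y - x) / (2 * l)))
      = ENNReal.ofReal (Real.exp (-x)) := by
  have h2l : (0:ℝ) < 2 * l := by linarith
  have hnn : 0 ≤ Real.exp (-x) / (2 * l) := by positivity
  calc ∫⁻ y : ℝ, ENNReal.ofReal (Real.exp (-x) / (2 * l) * stdPhi (l + (y - x) / (2 * l)))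
      = ∫⁻ y : ℝ, ENNReal.ofReal (Real.exp (-x) / (2 * l))
          * ENNReal.ofReal (stdPhi (l + (y - x) / (2 * l))) := by
        simp_rw [ENNReal.ofReal_mul hnn]
  _ = ENNReal.ofReal (Real.exp (-x) / (2 * l))
        * ∫⁻ y : ℝ, ENNReal.ofReal (stdPhi (l + (y - x) / (2 * l))) :=
      lintegral_const_mul _ ((continuous_stdPhi.comp (by fun_prop)).measurable.ennreal_ofReal)
  _ = ENNReal.ofReal (Real.exp (-x) / (2 * l))
        * ENNReal.ofReal (∫ y : ℝ, stdPhi (l + (y - x) / (2 * l))) := by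
      rw [← ofReal_integral_eq_lintegral_ofReal (integrable_inner hl x)
        (Eventually.of_forall fun y => stdPhi_nonneg _)]
  _ = ENNReal.ofReal (Real.exp (-x) / (2 * l)) * ENNReal.ofReal (2 * l) := by
      rw [inner_univ hl x]
  _ = ENNReal.ofReal (Real.exp (-x)) := by
      rw [← ENNReal.ofReal_mul hnn]
      congr 1
      field_simp
lemma inner_lintegral_Ioi {l : ℝ} (hl : 0 < l) (x : ℝ) :
    ∫⁻ y in Ioi (0:ℝ),
        ENNReal.ofReal (Real.exp (-x) / (2 * l) * stdPhi (l + (y - x) / (2 * l)))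
      = ENNReal.ofReal (Real.exp (-x) * stdPhiCDF (x / (2 * l) - l)) := by
  have h2l : (0:ℝ) < 2 * l := by linarith
  have hnn : 0 ≤ Real.exp (-x) / (2 * l) := by positivity
  calc ∫⁻ y in Ioi (0:ℝ),
        ENNReal.ofReal (Real.exp (-x) / (2 * l) * stdPhi (l + (y - x) / (2 * l)))
      = ∫⁻ y in Ioi (0:ℝ), ENNReal.ofReal (Real.exp (-x) / (2 * l))
          * ENNReal.ofReal (stdPhi (l + (y - x) / (2 * l))) := by
        simp_rw [ENNReal.ofReal_mul hnn]
  _ = ENNReal.ofReal (Real.exp (-x) / (2 * l))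
        * ∫⁻ y in Ioi (0:ℝ), ENNReal.ofReal (stdPhi (l + (y - x) / (2 * l))) :=
      lintegral_const_mul _ ((continuous_stdPhi.comp (by fun_prop)).measurable.ennreal_ofReal)
  _ = ENNReal.ofReal (Real.exp (-x) / (2 * l))
        * ENNReal.ofReal (∫ y in Ioi (0:ℝ), stdPhi (l + (y - x) / (2 * l))) := by
      rw [← ofReal_integral_eq_lintegral_ofReal (integrable_inner hl x).integrableOn
        (Eventually.of_forall fun y => stdPhi_nonneg _)]
  _ = ENNReal.ofReal (Real.exp (-x) / (2 * l))
        * ENNReal.ofReal (2 * l * stdPhiCDF (x / (2 * l) - l)) := by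
      rw [inner_Ioi hl x]
  _ = ENNReal.ofReal (Real.exp (-x) * stdPhiCDF (x / (2 * l) - l)) := by
      rw [← ENNReal.ofReal_mul hnn]
      congr 1
      field_simp

/-- The exponent measure of the set where at least one coordinate is positive is 2Φ(λ). -/
theorem HRexpMeasure_A2 (l : ℝ) (hl : 0 < l) :
    HRexpMeasure l {p : ℝ × ℝ | 0 < p.1 ∨ 0 < p.2} = ENNReal.ofReal (2 * stdPhiCDF l) := by
  have h2l : (0:ℝ) < 2 * l := by linarith
  have hFc : Continuous fun p : ℝ × ℝ =>
      Real.exp (-p.1) / (2 * l) * stdPhi (l + (p.2 - p.1) / (2 * l)) := by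
    apply Continuous.mul
    · exact (Real.continuous_exp.comp continuous_fst.neg).div_const _
    · exact continuous_stdPhi.comp
        (continuous_const.add ((continuous_snd.sub continuous_fst).div_const _))
  have hFm : Measurable fun p : ℝ × ℝ =>
      ENNReal.ofReal (Real.exp (-p.1) / (2 * l) * stdPhi (l + (p.2 - p.1) / (2 * l))) :=
    hFc.measurable.ennreal_ofReal
  have hA : {p : ℝ × ℝ | 0 < p.1 ∨ 0 < p.2}
      = (Ioi (0:ℝ)) ×ˢ (univ : Set ℝ) ∪ (Iic (0:ℝ)) ×ˢ (Ioi (0:ℝ)) := by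
    ext ⟨x, y⟩
    by_cases hx : 0 < x <;>
      simp [Set.mem_prod, hx, not_lt.1, le_of_not_gt]
  have hmeas1 : MeasurableSet ((Ioi (0:ℝ)) ×ˢ (univ : Set ℝ)) :=
    measurableSet_Ioi.prod MeasurableSet.univ
  have hmeas2 : MeasurableSet ((Iic (0:ℝ)) ×ˢ (Ioi (0:ℝ))) :=
    measurableSet_Iic.prod measurableSet_Ioi
  have hdisj : Disjoint ((Ioi (0:ℝ)) ×ˢ (univ : Set ℝ)) ((Iic (0:ℝ)) ×ˢ (Ioi (0:ℝ))) := by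
    rw [Set.disjoint_left]
    rintro ⟨x, y⟩ hx hx'
    simp only [Set.mem_prod, mem_Ioi, mem_Iic, mem_univ, and_true] at hx hx'
    exact absurd hx (not_lt.2 hx'.1)
  have hprod : ∀ (s t : Set ℝ),
      (∫⁻ p in s ×ˢ t,
        ENNReal.ofReal (Real.exp (-p.1) / (2 * l) * stdPhi (l + (p.2 - p.1) / (2 * l))))
      = ∫⁻ x in s, ∫⁻ y in t,
          ENNReal.ofReal (Real.exp (-x) / (2 * l) * stdPhi (l + (y - x) / (2 * l))) := by
    intro s t
    rw [Measure.volume_eq_prod, ← Measure.prod_restrict, lintegral_prod _ hFm.aemeasurable]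
  rw [HRexpMeasure, hA, withDensity_apply _ (hmeas1.union hmeas2),
    lintegral_union hmeas2 hdisj, hprod, hprod]
  have e1 : (∫⁻ x in Ioi (0:ℝ), ∫⁻ y in (univ : Set ℝ),
      ENNReal.ofReal (Real.exp (-x) / (2 * l) * stdPhi (l + (y - x) / (2 * l))))
      = ∫⁻ x in Ioi (0:ℝ), ENNReal.ofReal (Real.exp (-x)) :=
    lintegral_congr fun x => by rw [Measure.restrict_univ, inner_lintegral_univ hl x]
  have e2 : (∫⁻ x in Iic (0:ℝ), ∫⁻ y in Ioi (0:ℝ),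
      ENNReal.ofReal (Real.exp (-x) / (2 * l) * stdPhi (l + (y - x) / (2 * l))))
      = ∫⁻ x in Iic (0:ℝ), ENNReal.ofReal (Real.exp (-x) * stdPhiCDF (x / (2 * l) - l)) :=
    lintegral_congr fun x => by rw [inner_lintegral_Ioi hl x]
  rw [e1, e2]
  have p1 : (∫⁻ x in Ioi (0:ℝ), ENNReal.ofReal (Real.exp (-x)))
      = ENNReal.ofReal 1 := by
    have hint : IntegrableOn (fun x : ℝ => Real.exp (-x)) (Ioi 0) := by
      have := exp_neg_integrableOn_Ioi 0 (zero_lt_one (α := ℝ))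
      simpa using this
    rw [← ofReal_integral_eq_lintegral_ofReal hint
      (Eventually.of_forall fun x => (Real.exp_nonneg _)), integral_exp_neg_Ioi_zero]
  have p2 : (∫⁻ x in Iic (0:ℝ), ENNReal.ofReal (Real.exp (-x) * stdPhiCDF (x / (2 * l) - l)))
      = ENNReal.ofReal (stdPhiCDF l - stdPhiCDF (-l)) := by
    rw [← ofReal_integral_eq_lintegral_ofReal (integrableOn_g hl)
      (Eventually.of_forall fun x => mul_nonneg (Real.exp_nonneg _) (stdPhiCDF_nonneg _)),
      key_integral hl]
  rw [p1, p2]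
  have hmono : stdPhiCDF (-l) ≤ stdPhiCDF l := stdPhiCDF_mono (by linarith)
  rw [← ENNReal.ofReal_add zero_le_one (sub_nonneg.2 hmono)]
  congr 1
  have hneg := stdPhiCDF_neg l
  linarith
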